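/- There is no L-smooth convex function φ : E → ℝ with nonempty minimizer set that satisfies the Hölderian error bound condition φ(x) - φ* ≥ κ·dist(x, X*)^ρ on a sublevel set containing points outside X*, for any exponent ρ ∈ [1, 2) and κ > 0, unless the sublevel set contains no boundary approaching X*. Precisely: if φ is convex with L-Lipschitz gradient, X* = argmin φ ≠ ∅, and φ(x) - φ* ≥ κ·dist(x, X*)^ρ with ρ ∈ [1,2) holds for all x in a neighborhood of some point of X*, then ‖∇φ(x)‖ is bounded below by a positive constant for all non-optimal x in that neighborhood, contradicting continuity of ∇φ at minimizers that are limits of non-optimal points. -/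

import Mathlib

open Real RealInnerProductSpace

lemma convex_grad_ineq {E : Type*} [NormedAddCommGroup E] [InnerProductSpace ℝ E]
    [CompleteSpace E]
    (φ : E → ℝ) (x y g : E) (hconv : ConvexOn ℝ Set.univ φ)
    (hg : HasGradientAt φ g x) : φ x + ⟪g, y - x⟫ ≤ φ y := by
  set ψ : ℝ → ℝ := fun t => φ (x + t • (y - x)) with hψdef
  have hline : HasDerivAt (fun t : ℝ => x + t • (y - x)) (y - x) (0 : ℝ) := by
    simpa using ((hasDerivAt_id (0:ℝ)).smul_const (y - x)).const_add x
  have h0 : x + (0:ℝ) • (y - x) = x := by simp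
  have hF : HasFDerivAt φ ((InnerProductSpace.toDual ℝ E) g) (x + (0:ℝ) • (y - x)) := by
    rw [h0]; exact hg.hasFDerivAt
  have hψd : HasDerivAt ψ (⟪g, y - x⟫) 0 := by
    have := hF.comp_hasDerivAt (0:ℝ) hline
    simpa [InnerProductSpace.toDual_apply_apply, hψdef, Function.comp_def] using this
  have hψconv : ConvexOn ℝ Set.univ ψ := by
    have := hconv.comp_affineMap (AffineMap.lineMap x y)
    have heq : ψ = φ ∘ (AffineMap.lineMap x y) := by
      funext t
      simp [hψdef, AffineMap.lineMap_apply, add_comm]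
    rw [heq]
    simpa using this
  have hs := hψconv.le_slope_of_hasDerivAt (Set.mem_univ 0) (Set.mem_univ 1) zero_lt_one hψd
  have hslope : slope ψ 0 1 = φ y - φ x := by
    simp [slope_def_field, hψdef]
  rw [hslope] at hs
  linarith

theorem stmt8 {E : Type*} [NormedAddCommGroup E] [InnerProductSpace ℝ E]
    [FiniteDimensional ℝ E]
    (φ : E → ℝ) (φ' : E → E) (L κ ρ : ℝ) (hL : 0 < L) (hκ : 0 < κ)
    (hρ1 : 1 ≤ ρ) (hρ2 : ρ < 2)
    (hconv : ConvexOn ℝ Set.univ φ) (hgrad : ∀ x, HasGradientAt φ (φ' x) x)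
    (hlip : ∀ x y, ‖φ' x - φ' y‖ ≤ L * ‖x - y‖)
    (Xstar : Set E) (hX : Xstar = {z | ∀ x, φ z ≤ φ x})
    (xstar : E) (hxs : xstar ∈ Xstar)
    (U : Set E) (hU : U ∈ nhds xstar)
    (hHEB : ∀ x ∈ U, κ * Metric.infDist x Xstar ^ ρ ≤ φ x - φ xstar) :
    ∃ c > 0, ∀ x ∈ U, x ∉ Xstar → c ≤ ‖φ' x‖ := by
  have hφcont : Continuous φ :=
    continuous_iff_continuousAt.mpr fun z => (hgrad z).differentiableAt.continuousAt
  have hclosed : IsClosed Xstar := by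
    rw [hX]
    have : {z : E | ∀ x, φ z ≤ φ x} = ⋂ y, {z : E | φ z ≤ φ y} := by
      ext z; simp
    rw [this]
    exact isClosed_iInter fun y => isClosed_le hφcont continuous_const
  have hne : Xstar.Nonempty := ⟨xstar, hxs⟩
  have h2ρ : 0 < 2 - ρ := by linarith
  set d₀ : ℝ := (κ / L) ^ (1 / (2 - ρ)) with hd₀def
  have hd₀pos : 0 < d₀ := Real.rpow_pos_of_pos (div_pos hκ hL) _
  refine ⟨κ * d₀ ^ (ρ - 1), by positivity, fun x hxU hxn => ?_⟩
  set d : ℝ := Metric.infDist x Xstar with hddef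
  have hdpos : 0 < d := (hclosed.notMem_iff_infDist_pos hne).1 hxn
  obtain ⟨p, hpX, hpd⟩ := hclosed.exists_infDist_eq_dist hne x
  have hφp : φ p = φ xstar := by
    rw [hX] at hpX hxs
    exact le_antisymm (hpX xstar) (hxs p)
  -- gradient of φ at p is zero
  have hgp : φ' p = 0 := by
    have hmin : IsLocalMin φ p := by
      apply IsMinOn.isLocalMin _ (Filter.univ_mem)
      intro z _
      rw [hX] at hpX
      exact hpX z
    have := hmin.hasFDerivAt_eq_zero (hgrad p).hasFDerivAt
    have h2 : (InnerProductSpace.toDual ℝ E) (φ' p) = (InnerProductSpace.toDual ℝ E) 0 := by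
      rw [this, map_zero]
    exact (InnerProductSpace.toDual ℝ E).injective h2
  set g : E := φ' x with hgdef
  have hdist : dist x p = d := hpd.symm
  have hxpnorm : ‖x - p‖ = d := by rw [← dist_eq_norm, hdist]
  -- key2 : φ x - φ p ≤ ‖g‖ * d
  have key2 : φ x - φ xstar ≤ ‖g‖ * d := by
    have h1 := convex_grad_ineq φ x p g hconv (hgrad x)
    have h2 : φ x - φ p ≤ ⟪g, x - p⟫ := by
      have : ⟪g, p - x⟫ = -⟪g, x - p⟫ := by
        rw [← inner_neg_right, neg_sub]
      linarith [h1, this ▸ h1]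
    calc φ x - φ xstar = φ x - φ p := by rw [hφp]
      _ ≤ ⟪g, x - p⟫ := h2
      _ ≤ ‖g‖ * ‖x - p‖ := real_inner_le_norm g (x - p)
      _ = ‖g‖ * d := by rw [hxpnorm]
  -- HEB
  have heb : κ * d ^ ρ ≤ φ x - φ xstar := hHEB x hxU
  -- κ * d ^ (ρ - 1) ≤ ‖g‖
  have hκd : κ * d ^ (ρ - 1) ≤ ‖g‖ := by
    have hdρ : d ^ ρ = d ^ (ρ - 1) * d := by
      calc d ^ ρ = d ^ (ρ - 1 + 1) := by ring_nf
        _ = d ^ (ρ - 1) * d ^ (1:ℝ) := Real.rpow_add hdpos _ _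
        _ = d ^ (ρ - 1) * d := by rw [Real.rpow_one]
    have : κ * d ^ (ρ - 1) * d ≤ ‖g‖ * d := by
      calc κ * d ^ (ρ - 1) * d = κ * d ^ ρ := by rw [hdρ]; ring
        _ ≤ φ x - φ xstar := heb
        _ ≤ ‖g‖ * d := key2
    exact le_of_mul_le_mul_right this hdpos
  -- Lipschitz : ‖g‖ ≤ L * d
  have hLd : ‖g‖ ≤ L * d := by
    have := hlip x p
    rw [hgp, sub_zero, hxpnorm] at this
    exact this
  -- d ≥ d₀
  have hdd₀ : d₀ ≤ d := by
    have hstep : κ ≤ L * d ^ (2 - ρ) := by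
      have hrp : (0:ℝ) < d ^ (ρ - 1) := Real.rpow_pos_of_pos hdpos _
      have hmul : κ * d ^ (ρ - 1) ≤ L * d ^ (2 - ρ) * d ^ (ρ - 1) := by
        have : d ^ (2 - ρ) * d ^ (ρ - 1) = d := by
          rw [← Real.rpow_add hdpos]
          norm_num
        calc κ * d ^ (ρ - 1) ≤ ‖g‖ := hκd
          _ ≤ L * d := hLd
          _ = L * (d ^ (2 - ρ) * d ^ (ρ - 1)) := by rw [this]
          _ = L * d ^ (2 - ρ) * d ^ (ρ - 1) := by ring
      exact le_of_mul_le_mul_right hmul hrp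
    have hdiv : κ / L ≤ d ^ (2 - ρ) := (div_le_iff₀ hL).mpr (by linarith [hstep])
    have := Real.rpow_le_rpow (le_of_lt (div_pos hκ hL)) hdiv (by positivity : (0:ℝ) ≤ 1 / (2 - ρ))
    rwa [← Real.rpow_mul hdpos.le, mul_one_div, div_self h2ρ.ne', Real.rpow_one] at this
  -- conclude
  have : κ * d₀ ^ (ρ - 1) ≤ κ * d ^ (ρ - 1) := by
    apply mul_le_mul_of_nonneg_left _ hκ.le
    exact Real.rpow_le_rpow hd₀pos.le hdd₀ (by linarith)
  linarith [hκd]
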